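/- (Two-sided norm estimate for the diagonal sum) There exists a real number α > 0 such that for every real q with |q| ≤ α and all natural numbers k, r, s, one has (1/2)·[r+s]_q! ≤ ∑_{i=0}^{r} q^{(r-i)² + 2k(r-i)}·[r]_q!·[s]_q!·binom(r,i)_q·binom(s,r-i)_q ≤ 2·[r+s]_q!, where terms with r - i > s vanish since the corresponding q-binomial coefficient is 0. (By the inner product formula, this sum equals ‖ξ_{r,s}‖² = ‖e^{⊗r} ⊗ ξ ⊗ e^{⊗s}‖_q² for a degree-k unit vector ξ killed by the left and right annihilation operators of e.) -/

import Mathlib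

/-- The q-integer `[n]_q = (1 - q^n)/(1 - q)`. -/
noncomputable def qInt (q : ℝ) (n : ℕ) : ℝ := (1 - q ^ n) / (1 - q)

/-- The q-factorial `[n]_q! = [1]_q ⋯ [n]_q`, with `[0]_q! = 1`. -/
noncomputable def qFact (q : ℝ) : ℕ → ℝ
  | 0 => 1
  | n + 1 => qFact q n * qInt q (n + 1)

/-- The q-binomial coefficient `binom(n,m)_q`, with value `0` when `m > n`. -/
noncomputable def qBinom (q : ℝ) (n m : ℕ) : ℝ :=
  if m ≤ n then qFact q n / (qFact q m * qFact q (n - m)) else 0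

section aux
variable {q : ℝ}

lemma abs_pow_le (hq : |q| ≤ 1/20) (n : ℕ) : |q ^ n| ≤ (1/20 : ℝ) ^ n := by
  rw [abs_pow]
  exact pow_le_pow_left₀ (abs_nonneg q) hq n

lemma small_pow_le {a : ℕ} (ha : 1 ≤ a) : ((1:ℝ)/20) ^ a ≤ 1/20 := by
  calc (1/20 : ℝ) ^ a ≤ (1/20:ℝ)^1 :=
        pow_le_pow_of_le_one (by norm_num) (by norm_num) ha
    _ = 1/20 := pow_one _

lemma qInt_pos' (hq : |q| ≤ 1/20) {n : ℕ} (hn : 1 ≤ n) : 0 < qInt q n := by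
  have h1 : |q ^ n| ≤ (1/20 : ℝ) ^ n := abs_pow_le hq n
  have h3 : q ^ n ≤ 1/20 := (abs_le.1 (h1.trans (small_pow_le hn))).2
  have h4 : q ≤ 1/20 := (abs_le.1 hq).2
  unfold qInt
  apply div_pos <;> linarith

lemma qFact_pos (hq : |q| ≤ 1/20) (n : ℕ) : 0 < qFact q n := by
  induction n with
  | zero => norm_num [qFact]
  | succ n ih => exact mul_pos ih (qInt_pos' hq (Nat.succ_le_succ (Nat.zero_le n)))

lemma qBinom_zero (hq : |q| ≤ 1/20) (n : ℕ) : qBinom q n 0 = 1 := by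
  unfold qBinom
  rw [if_pos (Nat.zero_le n)]
  simp only [Nat.sub_zero, qFact]
  rw [one_mul, div_self (qFact_pos hq n).ne']

lemma qBinom_self (hq : |q| ≤ 1/20) (n : ℕ) : qBinom q n n = 1 := by
  unfold qBinom
  rw [if_pos le_rfl]
  simp only [Nat.sub_self, qFact]
  rw [mul_one, div_self (qFact_pos hq n).ne']

lemma qBinom_succ_succ (hq : |q| ≤ 1/20) {m t : ℕ} (hmt : m ≤ t) :
    qBinom q (t+1) (m+1) = qBinom q t m * (qInt q (t+1) / qInt q (m+1)) := by
  unfold qBinom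
  rw [if_pos (Nat.succ_le_succ hmt), if_pos hmt]
  have h1 : t + 1 - (m + 1) = t - m := by omega
  rw [h1]
  show qFact q t * qInt q (t+1) / (qFact q m * qInt q (m+1) * qFact q (t - m)) = _
  have hm := (qFact_pos hq m).ne'
  have ht := (qFact_pos hq (t-m)).ne'
  have hi := (qInt_pos' hq (show 1 ≤ m+1 by omega)).ne'
  rw [div_mul_div_comm, div_eq_div_iff (by simp [hm, ht, hi]) (by simp [hm, ht, hi])]
  ring

lemma qInt_ratio_bounds (hq : |q| ≤ 1/20) {a n : ℕ} (ha : 1 ≤ a) (han : a ≤ n) :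
    (1 - (1/20:ℝ)^a) / (1 + (1/20:ℝ)^a) ≤ qInt q n / qInt q a ∧
    qInt q n / qInt q a ≤ (1 + (1/20:ℝ)^a) / (1 - (1/20:ℝ)^a) := by
  set x : ℝ := (1/20:ℝ)^a with hx
  have hx0 : 0 ≤ x := by positivity
  have hx1 : x ≤ 1/20 := small_pow_le ha
  have hqn : |q ^ n| ≤ x := by
    refine (abs_pow_le hq n).trans ?_
    exact pow_le_pow_of_le_one (by norm_num) (by norm_num) han
  have hqa : |q ^ a| ≤ x := abs_pow_le hq a
  obtain ⟨hn1, hn2⟩ := abs_le.1 hqn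
  obtain ⟨ha1, ha2⟩ := abs_le.1 hqa
  have h1q : (0:ℝ) < 1 - q := by have := (abs_le.1 hq).2; linarith
  have key : qInt q n / qInt q a = (1 - q^n) / (1 - q^a) := by
    unfold qInt
    rw [div_div_div_cancel_right₀]
    exact h1q.ne'
  rw [key]
  constructor
  · apply div_le_div₀ (by linarith) (by linarith) (by linarith) (by linarith)
  · apply div_le_div₀ (by linarith) (by linarith) (by linarith) (by linarith)

lemma qBinom_bounds (hq : |q| ≤ 1/20) : ∀ m n : ℕ, m ≤ n →
    1 - 3/19 * (1 - (1/20:ℝ)^m) ≤ qBinom q n m ∧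
    qBinom q n m * (1 - 3/19 * (1 - (1/20:ℝ)^m)) ≤ 1 := by
  intro m
  induction m with
  | zero =>
    intro n _
    rw [qBinom_zero hq]
    norm_num
  | succ m ih =>
    intro n hn
    obtain ⟨t, rfl⟩ : ∃ t, n = t + 1 := ⟨n - 1, by omega⟩
    have hmt : m ≤ t := by omega
    obtain ⟨hB1, hB2⟩ := ih t hmt
    obtain ⟨hR1, hR2⟩ := qInt_ratio_bounds hq (Nat.succ_le_succ (Nat.zero_le m)) hn
    simp only [Nat.succ_eq_add_one] at hR1 hR2
    rw [qBinom_succ_succ hq hmt]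
    set x : ℝ := (1/20:ℝ)^(m+1) with hxdef
    set c : ℝ := 1 - 3/19 * (1 - (1/20:ℝ)^m) with hcdef
    have hxc : 1 - 3/19 * (1 - (1/20:ℝ)^(m+1)) = c - 3*x := by
      rw [hcdef, hxdef, pow_succ]; ring
    rw [hxc]
    have hx0 : 0 ≤ x := by positivity
    have hx1 : x ≤ 1/20 := small_pow_le (by omega)
    have hxm : (1/20:ℝ)^m ≤ 1 := pow_le_one₀ (by norm_num) (by norm_num)
    have hxm0 : (0:ℝ) ≤ (1/20:ℝ)^m := by positivity
    have hc1 : c ≤ 1 := by rw [hcdef]; nlinarith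
    have hc0 : (16:ℝ)/19 ≤ c := by rw [hcdef]; nlinarith
    have hcpos : (0:ℝ) < c := lt_of_lt_of_le (by norm_num) hc0
    set B : ℝ := qBinom q t m
    set R : ℝ := qInt q (t+1) / qInt q (m+1)
    have h1x : (0:ℝ) < 1 - x := by linarith
    have h1x' : (0:ℝ) < 1 + x := by linarith
    have hBpos : 0 < B := lt_of_lt_of_le hcpos hB1
    have hRpos : 0 < R := lt_of_lt_of_le (div_pos h1x h1x') hR1
    have hR2' : R * (1 - x) ≤ 1 + x := (le_div_iff₀ h1x).1 hR2
    have hR1' : 1 - x ≤ R * (1 + x) := (div_le_iff₀ h1x').1 hR1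
    clear_value B R x c
    have key : (c - 3*x) * (1 + x) ≤ c * (1 - x) := by nlinarith
    have hc3x0 : (0:ℝ) ≤ c - 3*x := by linarith
    constructor
    · -- lower bound
      have h5 : c * (1 - x) ≤ c * (R * (1 + x)) :=
        mul_le_mul_of_nonneg_left hR1' hcpos.le
      have h6 : c * (R * (1 + x)) ≤ B * (R * (1 + x)) :=
        mul_le_mul_of_nonneg_right hB1 (by positivity)
      have hchain : (c - 3*x) * (1 + x) ≤ B * R * (1 + x) := by
        calc (c - 3*x) * (1 + x) ≤ c * (1 - x) := key
          _ ≤ c * (R * (1 + x)) := h5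
          _ ≤ B * (R * (1 + x)) := h6
          _ = B * R * (1 + x) := by ring
      exact le_of_mul_le_mul_right hchain h1x'
    · -- upper bound
      have h7 : B * c * (R * (1 - x)) ≤ 1 * (1 + x) :=
        mul_le_mul hB2 hR2' (by positivity) (by norm_num)
      have h8 : B * c * (R * (1 - x)) * (c - 3*x) ≤ 1 * (1 + x) * (c - 3*x) :=
        mul_le_mul_of_nonneg_right h7 hc3x0
      have hpos : 0 < c * (1 - x) := mul_pos hcpos h1x
      have hchain : B * R * (c - 3*x) * (c * (1 - x)) ≤ 1 * (c * (1 - x)) := by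
        calc B * R * (c - 3*x) * (c * (1 - x)) = B * c * (R * (1 - x)) * (c - 3*x) := by ring
          _ ≤ 1 * (1 + x) * (c - 3*x) := h8
          _ = (c - 3*x) * (1 + x) := by ring
          _ ≤ c * (1 - x) := key
          _ = 1 * (c * (1 - x)) := by ring
      exact le_of_mul_le_mul_right hchain hpos

end aux

section main
variable {q : ℝ}

lemma qBinom_ge (hq : |q| ≤ 1/20) {m n : ℕ} (h : m ≤ n) : (16:ℝ)/19 ≤ qBinom q n m := by
  have h1 := (qBinom_bounds hq m n h).1
  have h2 : (0:ℝ) ≤ (1/20:ℝ)^m := by positivity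
  have h3 : (1/20:ℝ)^m ≤ 1 := pow_le_one₀ (by norm_num) (by norm_num)
  nlinarith

lemma qBinom_nonneg (hq : |q| ≤ 1/20) (n m : ℕ) : 0 ≤ qBinom q n m := by
  by_cases h : m ≤ n
  · linarith [qBinom_ge hq h]
  · unfold qBinom; rw [if_neg h]

lemma qBinom_le (hq : |q| ≤ 1/20) (n m : ℕ) : qBinom q n m ≤ 19/16 := by
  by_cases h : m ≤ n
  · have h1 := (qBinom_bounds hq m n h).2
    have h2 : (0:ℝ) ≤ (1/20:ℝ)^m := by positivity
    have h3 : (1/20:ℝ)^m ≤ 1 := pow_le_one₀ (by norm_num) (by norm_num)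
    have h4 := qBinom_nonneg hq n m
    nlinarith
  · unfold qBinom; rw [if_neg h]; norm_num

lemma qFact_add (hq : |q| ≤ 1/20) (r s : ℕ) :
    qFact q (r + s) = qBinom q (r+s) r * (qFact q r * qFact q s) := by
  unfold qBinom
  rw [if_pos (Nat.le_add_right r s)]
  have h1 : r + s - r = s := by omega
  rw [h1, div_mul_cancel₀]
  exact (mul_pos (qFact_pos hq r) (qFact_pos hq s)).ne'

lemma geo_sum_le : ∀ r : ℕ, (∑ i ∈ Finset.range r, ((1:ℝ)/20)^(r-i)) ≤ 1/19 := by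
  intro r
  induction r with
  | zero => simp
  | succ r ih =>
    rw [Finset.sum_range_succ]
    have h1 : (∑ i ∈ Finset.range r, ((1:ℝ)/20)^(r+1-i)) =
        (1/20) * ∑ i ∈ Finset.range r, ((1:ℝ)/20)^(r-i) := by
      rw [Finset.mul_sum]
      apply Finset.sum_congr rfl
      intro i hi
      have hir : i < r := Finset.mem_range.1 hi
      have h2 : r + 1 - i = (r - i) + 1 := by omega
      rw [h2, pow_succ]
      ring
    rw [h1]
    have h3 : r + 1 - r = 1 := by omega
    rw [h3, pow_one]
    nlinarith

end main

/-- Two-sided norm estimate for the diagonal sum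
`‖ξ_{r,s}‖² = ∑_i q^{(r-i)² + 2k(r-i)} [r]_q! [s]_q! binom(r,i)_q binom(s,r-i)_q`. -/
theorem diagonal_sum_two_sided_bound :
    ∃ α : ℝ, 0 < α ∧ ∀ q : ℝ, |q| ≤ α → ∀ k r s : ℕ,
      (1 / 2) * qFact q (r + s) ≤
        (∑ i ∈ Finset.range (r + 1),
          q ^ ((r - i) ^ 2 + 2 * k * (r - i)) *
            qFact q r * qFact q s * qBinom q r i * qBinom q s (r - i)) ∧
      (∑ i ∈ Finset.range (r + 1),
          q ^ ((r - i) ^ 2 + 2 * k * (r - i)) *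
            qFact q r * qFact q s * qBinom q r i * qBinom q s (r - i)) ≤
        2 * qFact q (r + s) := by
  refine ⟨1/20, by norm_num, fun q hq k r s => ?_⟩
  set F : ℝ := qFact q r * qFact q s with hFdef
  have hF : 0 < F := mul_pos (qFact_pos hq r) (qFact_pos hq s)
  rw [Finset.sum_range_succ]
  have hlast : q ^ ((r - r) ^ 2 + 2 * k * (r - r)) *
      qFact q r * qFact q s * qBinom q r r * qBinom q s (r - r) = F := by
    rw [Nat.sub_self]
    simp [qBinom_self hq, qBinom_zero hq]
    exact hFdef.symm
  rw [hlast]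
  set E : ℝ := ∑ i ∈ Finset.range r,
    q ^ ((r - i) ^ 2 + 2 * k * (r - i)) *
      qFact q r * qFact q s * qBinom q r i * qBinom q s (r - i) with hEdef
  have hA0 : (0:ℝ) ≤ qFact q r := (qFact_pos hq r).le
  have hB0 : (0:ℝ) ≤ qFact q s := (qFact_pos hq s).le
  have hE : |E| ≤ 19/256 * F := by
    calc |E| ≤ ∑ i ∈ Finset.range r,
        |q ^ ((r - i) ^ 2 + 2 * k * (r - i)) *
          qFact q r * qFact q s * qBinom q r i * qBinom q s (r - i)| :=
          Finset.abs_sum_le_sum_abs _ _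
      _ ≤ ∑ i ∈ Finset.range r, ((1:ℝ)/20)^(r-i) * (361/256 * F) := by
          apply Finset.sum_le_sum
          intro i hi
          have hir : i < r := Finset.mem_range.1 hi
          have he : r - i ≤ (r - i) ^ 2 + 2 * k * (r - i) := by
            calc r - i ≤ (r - i)^2 := Nat.le_self_pow two_ne_zero _
              _ ≤ _ := Nat.le_add_right _ _
          have hqe : |q ^ ((r - i) ^ 2 + 2 * k * (r - i))| ≤ ((1:ℝ)/20)^(r-i) :=
            (abs_pow_le hq _).trans
              (pow_le_pow_of_le_one (by norm_num) (by norm_num) he)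
          have hC := qBinom_le hq r i
          have hD := qBinom_le hq s (r-i)
          have hC0 := qBinom_nonneg hq r i
          have hD0 := qBinom_nonneg hq s (r-i)
          calc |q ^ ((r - i) ^ 2 + 2 * k * (r - i)) *
              qFact q r * qFact q s * qBinom q r i * qBinom q s (r - i)|
              = |q ^ ((r - i) ^ 2 + 2 * k * (r - i))| * qFact q r * qFact q s *
                qBinom q r i * qBinom q s (r - i) := by
                rw [abs_mul, abs_mul, abs_mul, abs_mul, abs_of_nonneg hA0,
                  abs_of_nonneg hB0, abs_of_nonneg hC0, abs_of_nonneg hD0]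
            _ ≤ ((1:ℝ)/20)^(r-i) * qFact q r * qFact q s * (19/16) * (19/16) := by
                gcongr
            _ = ((1:ℝ)/20)^(r-i) * (361/256 * F) := by rw [hFdef]; ring
      _ = (∑ i ∈ Finset.range r, ((1:ℝ)/20)^(r-i)) * (361/256 * F) := by
          rw [Finset.sum_mul]
      _ ≤ (1/19) * (361/256 * F) := by
          apply mul_le_mul_of_nonneg_right (geo_sum_le r) (by positivity)
      _ = 19/256 * F := by ring
  have hfa := qFact_add hq r s
  set G : ℝ := qBinom q (r+s) r with hGdef
  have hG1 : (16:ℝ)/19 ≤ G := qBinom_ge hq (Nat.le_add_right r s)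
  have hG2 : G ≤ 19/16 := qBinom_le hq (r+s) r
  obtain ⟨hE1, hE2⟩ := abs_le.1 hE
  rw [hfa]
  constructor
  · nlinarith
  · nlinarith
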